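/- Let δ > 0, 0 ≤ γ < 1/δ, 0 ≤ γ' < 1/δ with γ + γ' < 1, and for n > 1 set I(n) = ∫_{1/n}^1 ∫_{1/n}^1 min(1, (min(s,t))^{−γδ} (max(s,t))^{−γ'δ} n^{−δ}) ds dt. Then lim_{n→∞} (−log I(n) / log n) = δ. -/

import Mathlib

open Filter MeasureTheory Set intervalIntegral

namespace DeffAux

variable {a b c ε : ℝ}

private lemma gker_meas (a b c : ℝ) :
    Measurable fun p : ℝ × ℝ =>
      min 1 ((min p.1 p.2) ^ (-a) * (max p.1 p.2) ^ (-b) * c) := by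
  apply measurable_const.min
  exact (((measurable_fst.min measurable_snd).pow measurable_const).mul
    ((measurable_fst.max measurable_snd).pow measurable_const)).mul_const c

private lemma gker_nonneg (hc : 0 ≤ c) {s t : ℝ} (hs : 0 ≤ s) (ht : 0 ≤ t) :
    0 ≤ min 1 ((min s t) ^ (-a) * (max s t) ^ (-b) * c) :=
  le_min zero_le_one (mul_nonneg (mul_nonneg
    (Real.rpow_nonneg (le_min hs ht) _)
    (Real.rpow_nonneg (le_max_of_le_left hs) _)) hc)

private lemma inner_integrable (hc : 0 ≤ c) (hε : 0 < ε) {s : ℝ} (hs : 0 ≤ s) :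
    IntegrableOn (fun t => min 1 ((min s t) ^ (-a) * (max s t) ^ (-b) * c))
      (Icc ε 1) := by
  apply Measure.integrableOn_of_bounded (M := 1) (by simp)
  · exact ((gker_meas a b c).comp (measurable_const.prodMk measurable_id)).aestronglyMeasurable
  · filter_upwards [ae_restrict_mem measurableSet_Icc] with t ht
    rw [Real.norm_eq_abs, abs_of_nonneg (gker_nonneg hc hs (le_trans hε.le ht.1))]
    exact min_le_left _ _

private lemma inner_le_one (hc : 0 ≤ c) (hε : 0 < ε) (hε1 : ε ≤ 1) {s : ℝ} (hs : 0 ≤ s) :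
    ‖∫ t in Icc ε 1, min 1 ((min s t) ^ (-a) * (max s t) ^ (-b) * c)‖ ≤ 1 := by
  have h := norm_setIntegral_le_of_norm_le_const (μ := volume) (C := 1)
    (s := Icc ε 1)
    (f := fun t => min 1 ((min s t) ^ (-a) * (max s t) ^ (-b) * c))
    (by rw [Real.volume_Icc]; exact ENNReal.ofReal_lt_top)
    (fun t ht => by
      rw [Real.norm_eq_abs, abs_of_nonneg (gker_nonneg hc hs (le_trans hε.le ht.1))]
      exact min_le_left _ _)
  refine h.trans ?_
  rw [measureReal_def, Real.volume_Icc, one_mul, ENNReal.toReal_ofReal (by linarith)]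
  linarith

private lemma outer_integrable (hc : 0 ≤ c) (hε : 0 < ε) (hε1 : ε ≤ 1) :
    IntegrableOn
      (fun s => ∫ t in Icc ε 1, min 1 ((min s t) ^ (-a) * (max s t) ^ (-b) * c))
      (Icc ε 1) := by
  apply Measure.integrableOn_of_bounded (M := 1) (by simp)
  · exact ((gker_meas a b c).stronglyMeasurable.integral_prod_right').aestronglyMeasurable
  · filter_upwards [ae_restrict_mem measurableSet_Icc] with s hs
    exact inner_le_one hc hε hε1 (le_trans hε.le hs.1)

private lemma rpow_integrable (r : ℝ) (hε : 0 < ε) :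
    IntegrableOn (fun t : ℝ => t ^ (-r)) (Icc ε 1) := by
  refine (ContinuousOn.rpow_const continuousOn_id fun t ht => Or.inl ?_).integrableOn_compact
    isCompact_Icc
  exact ne_of_gt (lt_of_lt_of_le hε ht.1)

private lemma rpow_int_nonneg (r : ℝ) (hε : 0 < ε) :
    0 ≤ ∫ t in Icc ε 1, t ^ (-r) :=
  setIntegral_nonneg measurableSet_Icc fun t ht =>
    Real.rpow_nonneg (le_trans hε.le ht.1) _

private lemma rpow_int_le (hr0 : 0 ≤ r) (hr : r < 1) (hε : 0 < ε) (hε1 : ε ≤ 1) :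
    (∫ t in Icc ε 1, t ^ (-r)) ≤ 1 / (1 - r) := by
  rw [MeasureTheory.integral_Icc_eq_integral_Ioc,
    ← intervalIntegral.integral_of_le hε1,
    integral_rpow (Or.inl (by linarith)),
    Real.one_rpow]
  have h1 : 0 ≤ ε ^ (-r + 1) := Real.rpow_nonneg hε.le _
  have h2 : (0:ℝ) < -r + 1 := by linarith
  calc (1 - ε ^ (-r + 1)) / (-r + 1) ≤ 1 / (-r + 1) := by gcongr; linarith
    _ = 1 / (1 - r) := by ring_nf


private lemma lower_bound (ha : 0 ≤ a) (hb : 0 ≤ b) (hc0 : 0 < c) (hc1 : c ≤ 1)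
    (hε : 0 < ε) (hε1 : ε ≤ 1) :
    (1 - ε) * ((1 - ε) * c) ≤
      ∫ s in Icc ε 1, ∫ t in Icc ε 1, min 1 ((min s t) ^ (-a) * (max s t) ^ (-b) * c) := by
  have key : ∀ s ∈ Icc ε 1,
      (1 - ε) * c ≤ ∫ t in Icc ε 1, min 1 ((min s t) ^ (-a) * (max s t) ^ (-b) * c) := by
    intro s hs
    have hmono : (∫ _t in Icc ε 1, c) ≤
        ∫ t in Icc ε 1, min 1 ((min s t) ^ (-a) * (max s t) ^ (-b) * c) := by
      refine setIntegral_mono_on (integrableOn_const ?_)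
        (inner_integrable hc0.le hε (le_trans hε.le hs.1)) measurableSet_Icc ?_
      · rw [Real.volume_Icc]; exact ENNReal.ofReal_ne_top
      · intro t ht
        have hm0 : 0 < min s t := lt_min (lt_of_lt_of_le hε hs.1) (lt_of_lt_of_le hε ht.1)
        have hm1 : min s t ≤ 1 := min_le_of_left_le hs.2
        have hM0 : 0 < max s t := lt_max_of_lt_left (lt_of_lt_of_le hε hs.1)
        have hM1 : max s t ≤ 1 := max_le hs.2 ht.2
        have h1 : 1 ≤ (min s t) ^ (-a) :=
          Real.one_le_rpow_of_pos_of_le_one_of_nonpos hm0 hm1 (neg_nonpos.2 ha)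
        have h2 : 1 ≤ (max s t) ^ (-b) :=
          Real.one_le_rpow_of_pos_of_le_one_of_nonpos hM0 hM1 (neg_nonpos.2 hb)
        refine le_min hc1 ?_
        have h3 : (1:ℝ) ≤ (min s t) ^ (-a) * (max s t) ^ (-b) := by nlinarith
        nlinarith
    rw [setIntegral_const, measureReal_def, Real.volume_Icc, ENNReal.toReal_ofReal (by linarith),
      smul_eq_mul] at hmono
    exact hmono
  have hmono2 : (∫ _s in Icc ε 1, (1 - ε) * c) ≤
      ∫ s in Icc ε 1, ∫ t in Icc ε 1, min 1 ((min s t) ^ (-a) * (max s t) ^ (-b) * c) := by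
    refine setIntegral_mono_on (integrableOn_const ?_)
      (outer_integrable hc0.le hε hε1) measurableSet_Icc key
    rw [Real.volume_Icc]; exact ENNReal.ofReal_ne_top
  rwa [setIntegral_const, measureReal_def, Real.volume_Icc, ENNReal.toReal_ofReal (by linarith),
    smul_eq_mul] at hmono2

private lemma upper_bound (ha0 : 0 ≤ a) (ha : a < 1) (hb0 : 0 ≤ b) (hb : b < 1)
    (hc : 0 ≤ c) (hε : 0 < ε) (hε1 : ε ≤ 1) :
    (∫ s in Icc ε 1, ∫ t in Icc ε 1, min 1 ((min s t) ^ (-a) * (max s t) ^ (-b) * c))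
      ≤ 2 / ((1 - a) * (1 - b)) * c := by
  set A := ∫ t in Icc ε 1, t ^ (-a) with hA
  set B := ∫ t in Icc ε 1, t ^ (-b) with hB
  have hA0 : 0 ≤ A := rpow_int_nonneg a hε
  have hB0 : 0 ≤ B := rpow_int_nonneg b hε
  have hAle : A ≤ 1 / (1 - a) := rpow_int_le ha0 ha hε hε1
  have hBle : B ≤ 1 / (1 - b) := rpow_int_le hb0 hb hε hε1
  -- inner bound
  have key : ∀ s ∈ Icc ε 1,
      (∫ t in Icc ε 1, min 1 ((min s t) ^ (-a) * (max s t) ^ (-b) * c))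
        ≤ (s ^ (-a) * B + s ^ (-b) * A) * c := by
    intro s hs
    have hs0 : 0 < s := lt_of_lt_of_le hε hs.1
    have hint : IntegrableOn
        (fun t : ℝ => (s ^ (-a) * t ^ (-b) + s ^ (-b) * t ^ (-a)) * c) (Icc ε 1) :=
      (((rpow_integrable b hε).const_mul _).add
        ((rpow_integrable a hε).const_mul _)).mul_const c
    have hmono : (∫ t in Icc ε 1, min 1 ((min s t) ^ (-a) * (max s t) ^ (-b) * c))
        ≤ ∫ t in Icc ε 1, (s ^ (-a) * t ^ (-b) + s ^ (-b) * t ^ (-a)) * c := by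
      refine setIntegral_mono_on (inner_integrable hc hε hs0.le) hint measurableSet_Icc ?_
      intro t ht
      have ht0 : 0 < t := lt_of_lt_of_le hε ht.1
      refine (min_le_right _ _).trans ?_
      rcases le_total s t with h | h
      · rw [min_eq_left h, max_eq_right h]
        have : 0 ≤ s ^ (-b) * t ^ (-a) * c :=
          mul_nonneg (mul_nonneg (Real.rpow_nonneg hs0.le _) (Real.rpow_nonneg ht0.le _)) hc
        nlinarith
      · rw [min_eq_right h, max_eq_left h]
        have : 0 ≤ s ^ (-a) * t ^ (-b) * c :=
          mul_nonneg (mul_nonneg (Real.rpow_nonneg hs0.le _) (Real.rpow_nonneg ht0.le _)) hc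
        nlinarith
    refine hmono.trans_eq ?_
    rw [MeasureTheory.integral_mul_const, MeasureTheory.integral_add
      ((rpow_integrable b hε).const_mul _) ((rpow_integrable a hε).const_mul _),
      MeasureTheory.integral_const_mul, MeasureTheory.integral_const_mul, ← hA, ← hB]
  have hint2 : IntegrableOn (fun s : ℝ => (s ^ (-a) * B + s ^ (-b) * A) * c) (Icc ε 1) :=
    (((rpow_integrable a hε).mul_const _).add
      ((rpow_integrable b hε).mul_const _)).mul_const c
  have hmono2 : (∫ s in Icc ε 1, ∫ t in Icc ε 1,
        min 1 ((min s t) ^ (-a) * (max s t) ^ (-b) * c))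
      ≤ ∫ s in Icc ε 1, (s ^ (-a) * B + s ^ (-b) * A) * c :=
    setIntegral_mono_on (outer_integrable hc hε hε1) hint2 measurableSet_Icc key
  have heq : (∫ s in Icc ε 1, (s ^ (-a) * B + s ^ (-b) * A) * c) = (A * B + B * A) * c := by
    rw [MeasureTheory.integral_mul_const, MeasureTheory.integral_add
      ((rpow_integrable a hε).mul_const _) ((rpow_integrable b hε).mul_const _),
      MeasureTheory.integral_mul_const, MeasureTheory.integral_mul_const, ← hA, ← hB]
  have hfin : (A * B + B * A) * c ≤ 2 / ((1 - a) * (1 - b)) * c := by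
    have h1 : A * B ≤ (1 / (1 - a)) * (1 / (1 - b)) :=
      mul_le_mul hAle hBle hB0 (div_nonneg zero_le_one (by linarith))
    have h2 : (1 / (1 - a)) * (1 / (1 - b)) = 1 / ((1 - a) * (1 - b)) := by
      rw [div_mul_div_comm, one_mul]
    have h3 : A * B * c ≤ (1 / ((1 - a) * (1 - b))) * c := by
      rw [← h2]; exact mul_le_mul_of_nonneg_right h1 hc
    calc (A * B + B * A) * c = 2 * (A * B * c) := by ring
      _ ≤ 2 * ((1 / ((1 - a) * (1 - b))) * c) := by linarith
      _ = 2 / ((1 - a) * (1 - b)) * c := by ring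
  calc _ ≤ ∫ s in Icc ε 1, (s ^ (-a) * B + s ^ (-b) * A) * c := hmono2
    _ = (A * B + B * A) * c := heq
    _ ≤ _ := hfin

end DeffAux

open Filter

/-- Effective decay exponent of the weight-dependent random connection model with
interpolation kernel and long-range profile: in the regime `γ < 1/δ`, `γ' < 1/δ`,
`γ + γ' < 1`, one has `δ_eff = δ`, i.e. `-log I(n) / log n → δ` for
`I(n) = ∫∫_{[1/n,1]²} min(1, (s∧t)^(-γδ)(s∨t)^(-γ'δ) n^(-δ)) ds dt`. -/
theorem deff_kernel_small_gamma (δ γ γ' : ℝ) (hδ : 0 < δ)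
    (hγ0 : 0 ≤ γ) (hγ : γ < 1 / δ) (hγ'0 : 0 ≤ γ') (hγ' : γ' < 1 / δ)
    (hsum : γ + γ' < 1) :
    Tendsto (fun n : ℝ =>
      -Real.log (∫ s in Set.Icc (1 / n) 1, ∫ t in Set.Icc (1 / n) 1,
          min 1 ((min s t) ^ (-(γ * δ)) * (max s t) ^ (-(γ' * δ)) * n ^ (-δ)))
        / Real.log n) atTop (nhds δ) := by
  have hδ' : δ ≠ 0 := ne_of_gt hδ
  set a := γ * δ with hadef
  set b := γ' * δ with hbdef
  have ha0 : 0 ≤ a := mul_nonneg hγ0 hδ.le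
  have hb0 : 0 ≤ b := mul_nonneg hγ'0 hδ.le
  have ha1 : a < 1 := by
    have := mul_lt_mul_of_pos_right hγ hδ
    rwa [one_div, inv_mul_cancel₀ hδ'] at this
  have hb1 : b < 1 := by
    have := mul_lt_mul_of_pos_right hγ' hδ
    rwa [one_div, inv_mul_cancel₀ hδ'] at this
  set C : ℝ := 2 / ((1 - a) * (1 - b)) with hCdef
  have hden : 0 < (1 - a) * (1 - b) := by nlinarith
  have hC1 : 1 ≤ C := by
    rw [hCdef, le_div_iff₀ hden]; nlinarith
  have hC0 : 0 < C := lt_of_lt_of_le one_pos hC1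
  have key : ∀ n : ℝ, 2 ≤ n →
      δ - Real.log C / Real.log n ≤
        -Real.log (∫ s in Set.Icc (1 / n) 1, ∫ t in Set.Icc (1 / n) 1,
          min 1 ((min s t) ^ (-a) * (max s t) ^ (-b) * n ^ (-δ))) / Real.log n ∧
      -Real.log (∫ s in Set.Icc (1 / n) 1, ∫ t in Set.Icc (1 / n) 1,
          min 1 ((min s t) ^ (-a) * (max s t) ^ (-b) * n ^ (-δ))) / Real.log n ≤
        δ + Real.log 4 / Real.log n := by
    intro n hn
    set In := ∫ s in Set.Icc (1 / n) 1, ∫ t in Set.Icc (1 / n) 1,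
      min 1 ((min s t) ^ (-a) * (max s t) ^ (-b) * n ^ (-δ)) with hIdef
    have hn1 : (1:ℝ) < n := by linarith
    have hn0 : (0:ℝ) < n := by linarith
    have hε : (0:ℝ) < 1 / n := by positivity
    have hε1 : 1 / n ≤ 1 := by rw [div_le_one hn0]; linarith
    have hεhalf : 1 / n ≤ 1 / 2 := by
      rw [div_le_div_iff₀ hn0 (by norm_num)]; linarith
    have hc0 : 0 < n ^ (-δ) := Real.rpow_pos_of_pos hn0 _
    have hc1 : n ^ (-δ) ≤ 1 := Real.rpow_le_one_of_one_le_of_nonpos hn1.le (neg_nonpos.2 hδ.le)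
    have hlow := DeffAux.lower_bound ha0 hb0 hc0 hc1 hε hε1
    have hup := DeffAux.upper_bound ha0 ha1 hb0 hb1 hc0.le hε hε1
    rw [← hIdef] at hlow hup
    have hq : (1:ℝ)/2 ≤ 1 - 1/n := by linarith
    have hsq : (1:ℝ)/4 ≤ (1 - 1/n) * (1 - 1/n) := by nlinarith
    have hIl : n ^ (-δ) * (1/4) ≤ In :=
      le_trans (by nlinarith [mul_le_mul_of_nonneg_right hsq hc0.le]) hlow
    have hIu : In ≤ C * n ^ (-δ) := by rw [hCdef]; exact hup
    have hIpos : 0 < In := lt_of_lt_of_le (by positivity) hIl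
    have hln : 0 < Real.log n := Real.log_pos hn1
    have hlogc : Real.log (n ^ (-δ)) = -δ * Real.log n := by
      rw [Real.log_rpow hn0]
    have h1 : Real.log (n ^ (-δ) * (1/4)) ≤ Real.log In := Real.log_le_log (by positivity) hIl
    have h2 : Real.log In ≤ Real.log (C * n ^ (-δ)) := Real.log_le_log hIpos hIu
    rw [Real.log_mul (ne_of_gt hc0) (by norm_num), hlogc, one_div, Real.log_inv] at h1
    rw [Real.log_mul (ne_of_gt hC0) (ne_of_gt hc0), hlogc] at h2
    constructor
    · have he : δ - Real.log C / Real.log n = (δ * Real.log n - Real.log C) / Real.log n := by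
        field_simp [hln.ne']
      rw [he, div_le_div_iff₀ hln hln]
      exact mul_le_mul_of_nonneg_right (by linarith) hln.le
    · have he : δ + Real.log 4 / Real.log n = (δ * Real.log n + Real.log 4) / Real.log n := by
        field_simp [hln.ne']
      rw [he, div_le_div_iff₀ hln hln]
      exact mul_le_mul_of_nonneg_right (by linarith) hln.le
  have h0l : Tendsto (fun n : ℝ => Real.log C / Real.log n) atTop (nhds 0) :=
    Tendsto.div_atTop tendsto_const_nhds Real.tendsto_log_atTop
  have h0u : Tendsto (fun n : ℝ => Real.log 4 / Real.log n) atTop (nhds 0) :=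
    Tendsto.div_atTop tendsto_const_nhds Real.tendsto_log_atTop
  have hl : Tendsto (fun n : ℝ => δ - Real.log C / Real.log n) atTop (nhds δ) := by
    simpa using tendsto_const_nhds.sub h0l
  have hu : Tendsto (fun n : ℝ => δ + Real.log 4 / Real.log n) atTop (nhds δ) := by
    simpa using tendsto_const_nhds.add h0u
  refine tendsto_of_tendsto_of_tendsto_of_le_of_le' hl hu ?_ ?_
  · filter_upwards [eventually_ge_atTop (2:ℝ)] with n hn
    exact (key n hn).1
  · filter_upwards [eventually_ge_atTop (2:ℝ)] with n hn
    exact (key n hn).2
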